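/- Let A be monotone and L-Lipschitz, p ∈ VI(C, A), y_n = P_C(w_n − λ_n A w_n), z_n = y_n − λ_n(Ay_n − Aw_n), and suppose ‖Aw_n − Ay_n‖ ≤ (μ/λ_{n+1})‖w_n − y_n‖ with μ ∈ (0,1), λ_n, λ_{n+1} > 0. Then ‖z_n − p‖² ≤ ‖w_n − p‖² − (1 − μ²λ_n²/λ_{n+1}²)‖w_n − y_n‖². -/

import Mathlib

open RealInnerProductSpace

theorem stmt_13 {H : Type*} [NormedAddCommGroup H] [InnerProductSpace ℝ H] [CompleteSpace H]
    (C : Set H) (hCne : C.Nonempty) (hCc : IsClosed C) (hCconv : Convex ℝ C)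
    (A : H → H) (L : ℝ) (hL : 0 < L)
    (hmono : ∀ x y : H, 0 ≤ ⟪A x - A y, x - y⟫)
    (hlip : LipschitzWith (Real.toNNReal L) A)
    (p : H) (hp : p ∈ C ∧ ∀ x ∈ C, 0 ≤ ⟪A p, x - p⟫)
    (μ lamn lamn1 : ℝ) (hμ : μ ∈ Set.Ioo (0 : ℝ) 1)
    (hlamn : 0 < lamn) (hlamn1 : 0 < lamn1)
    (w y z : H)
    (hy : y ∈ C ∧ ∀ u ∈ C, ‖w - lamn • A w - y‖ ≤ ‖w - lamn • A w - u‖)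
    (hz : z = y - lamn • (A y - A w))
    (hstep : ‖A w - A y‖ ≤ μ / lamn1 * ‖w - y‖) :
    ‖z - p‖ ^ 2 ≤ ‖w - p‖ ^ 2 - (1 - μ ^ 2 * lamn ^ 2 / lamn1 ^ 2) * ‖w - y‖ ^ 2 := by
  obtain ⟨hyC, hymin⟩ := hy
  -- projection characterization
  have hproj : ∀ u ∈ C, ⟪w - lamn • A w - y, u - y⟫ ≤ 0 := by
    have hbdd : BddBelow (Set.range fun u : C => ‖(w - lamn • A w) - (u : H)‖) := by
      refine ⟨0, ?_⟩
      rintro r ⟨u, rfl⟩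
      exact norm_nonneg _
    have : Nonempty C := ⟨⟨y, hyC⟩⟩
    have heq : ‖(w - lamn • A w) - y‖ = ⨅ u : C, ‖(w - lamn • A w) - (u : H)‖ := by
      refine le_antisymm (le_ciInf fun u => hymin u u.2) (ciInf_le hbdd ⟨y, hyC⟩)
    exact (norm_eq_iInf_iff_real_inner_le_zero hCconv hyC).mp heq
  have h1 : 0 ≤ ⟪w - lamn • A w - y, y - p⟫ := by
    have h := hproj p hp.1
    have hrw : (p - y : H) = -(y - p) := by abel
    rw [hrw, inner_neg_right] at h
    linarith
  have h2 : 0 ≤ ⟪A y, y - p⟫ := by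
    have hm := hmono y p
    have hv := hp.2 y hyC
    have hsub : ⟪A y - A p, y - p⟫ = ⟪A y, y - p⟫ - ⟪A p, y - p⟫ :=
      inner_sub_left _ _ _
    linarith
  -- expansion identity
  have key : ‖z - p‖ ^ 2 = ‖w - p‖ ^ 2 - ‖w - y‖ ^ 2 + lamn ^ 2 * ‖A w - A y‖ ^ 2
      - 2 * ⟪w - lamn • A w - y, y - p⟫ - 2 * lamn * ⟪A y, y - p⟫ := by
    have hz' : z - p = (y - p) + lamn • (A w - A y) := by
      rw [hz]; module
    rw [hz']
    rw [show ‖(y - p) + lamn • (A w - A y)‖ ^ 2 = ⟪(y - p) + lamn • (A w - A y), (y - p) + lamn • (A w - A y)⟫ from (real_inner_self_eq_norm_sq _).symm]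
    rw [show ‖w - p‖ ^ 2 = ⟪w - p, w - p⟫ from (real_inner_self_eq_norm_sq _).symm]
    rw [show ‖w - y‖ ^ 2 = ⟪w - y, w - y⟫ from (real_inner_self_eq_norm_sq _).symm]
    rw [show ‖A w - A y‖ ^ 2 = ⟪A w - A y, A w - A y⟫ from (real_inner_self_eq_norm_sq _).symm]
    simp only [inner_add_left, inner_add_right, inner_sub_left, inner_sub_right,
      real_inner_smul_left, real_inner_smul_right]
    simp only [real_inner_comm p w, real_inner_comm y w, real_inner_comm p y,
      real_inner_comm (A w) y, real_inner_comm (A w) p, real_inner_comm (A y) y,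
      real_inner_comm (A y) p, real_inner_comm (A y) (A w), real_inner_comm (A w) w,
      real_inner_comm (A y) w]
    ring
  -- bound on ‖A w - A y‖²
  have hc : ‖A w - A y‖ ^ 2 ≤ (μ / lamn1) ^ 2 * ‖w - y‖ ^ 2 := by
    have h0 : (0:ℝ) ≤ ‖A w - A y‖ := norm_nonneg _
    nlinarith [norm_nonneg (w - y), hμ.1, hlamn1]
  have harith : lamn ^ 2 * ((μ / lamn1) ^ 2 * ‖w - y‖ ^ 2)
      = μ ^ 2 * lamn ^ 2 / lamn1 ^ 2 * ‖w - y‖ ^ 2 := by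
    field_simp
  nlinarith [sq_nonneg lamn, mul_le_mul_of_nonneg_left hc (sq_nonneg lamn),
    mul_nonneg hlamn.le h2]
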